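/- There is a constant c_N > 0, depending only on the dimension N, with the following property: for every 0 < s < t < 1 and every measurable set E ⊆ ℝ^N with |E| < ∞, one has the interpolation estimate P_s(E) ≤ c_N · (1/s) · (1 − s/t)^{−1} · |E|^{1 − s/t} · ((1−t)·P_t(E))^{s/t} (as an inequality in [0,∞]). -/

import Mathlib

open MeasureTheory ENNReal
open Metric Set

/-- Interaction energy `∫_A ∫_B |x-y|^{-(N+α)} dy dx` in `[0,∞]`. -/
noncomputable def interEnergy (N : ℕ) (α : ℝ)
    (A B : Set (EuclideanSpace ℝ (Fin N))) : ℝ≥0∞ :=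
  ∫⁻ x in A, ∫⁻ y in B, ENNReal.ofReal (‖x - y‖ ^ (-((N : ℝ) + α))) ∂volume ∂volume

/-- The fractional `α`-perimeter `P_α(E) = ∫_E ∫_{Eᶜ} |x-y|^{-(N+α)} dy dx`. -/
noncomputable def fracPer (N : ℕ) (α : ℝ) (E : Set (EuclideanSpace ℝ (Fin N))) : ℝ≥0∞ :=
  interEnergy N α E Eᶜ



/-- `x/4 ≤ 1 - 2^(-x) ≤ x` for `x ∈ (0,1]`. -/
lemma two_rpow_neg_bounds {x : ℝ} (hx : 0 < x) (hx1 : x ≤ 1) :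
    x / 4 ≤ 1 - (2:ℝ) ^ (-x) ∧ 1 - (2:ℝ) ^ (-x) ≤ x := by
  have hlog2 : (0.6931471803:ℝ) < Real.log 2 := Real.log_two_gt_d9
  have hlog2' : Real.log 2 < 0.6931471808 := Real.log_two_lt_d9
  have h2 : (2:ℝ) ^ (-x) = Real.exp (-(x * Real.log 2)) := by
    rw [Real.rpow_def_of_pos two_pos]; ring_nf
  set y := x * Real.log 2 with hy
  have hy0 : 0 < y := by positivity
  have hy1 : y ≤ Real.log 2 := by
    calc y ≤ 1 * Real.log 2 := by rw [hy]; nlinarith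
    _ = Real.log 2 := one_mul _
  have hexp : 1 + y ≤ Real.exp y := by linarith [Real.add_one_le_exp y]
  have hexpneg_le : Real.exp (-y) ≤ (1 + y)⁻¹ := by
    rw [Real.exp_neg]
    exact inv_anti₀ (by linarith) hexp
  have hexpneg_ge : 1 - y ≤ Real.exp (-y) := by linarith [Real.add_one_le_exp (-y)]
  constructor
  · rw [h2]
    have h1y : (1:ℝ) + y ≤ 2 := by linarith
    have : (1 + y)⁻¹ ≤ 1 - y / 2 := by
      rw [inv_le_iff_one_le_mul₀ (by linarith)]
      nlinarith
    have hxy : x / 2 ≤ y := by nlinarith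
    linarith
  · rw [h2]
    have : y ≤ x := by nlinarith
    linarith

/-- Geometric sum bound: `∑ a·(2^(-x))^k ≤ 4a/x`. -/
lemma tsum_ofReal_geom {a x : ℝ} (ha : 0 ≤ a) (hx0 : 0 < x) (hx1 : x ≤ 1) :
    ∑' k : ℕ, ENNReal.ofReal (a * ((2:ℝ) ^ (-x)) ^ k) ≤ ENNReal.ofReal (4 * a / x) := by
  have hq0 : (0:ℝ) ≤ (2:ℝ) ^ (-x) := Real.rpow_nonneg (by norm_num) _
  have key : ∀ k : ℕ, ENNReal.ofReal (a * ((2:ℝ) ^ (-x)) ^ k)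
      = ENNReal.ofReal a * (ENNReal.ofReal ((2:ℝ) ^ (-x))) ^ k := by
    intro k
    rw [ENNReal.ofReal_mul ha, ENNReal.ofReal_pow hq0]
  rw [tsum_congr key, ENNReal.tsum_mul_left, ENNReal.tsum_geometric]
  have h1 : 1 - ENNReal.ofReal ((2:ℝ) ^ (-x)) = ENNReal.ofReal (1 - (2:ℝ) ^ (-x)) := by
    rw [ENNReal.ofReal_sub _ hq0, ENNReal.ofReal_one]
  obtain ⟨hb1, _⟩ := two_rpow_neg_bounds hx0 hx1
  have h2 : (1 - ENNReal.ofReal ((2:ℝ) ^ (-x)))⁻¹ ≤ ENNReal.ofReal (4 / x) := by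
    rw [h1]
    have : ENNReal.ofReal (x / 4) ≤ ENNReal.ofReal (1 - (2:ℝ) ^ (-x)) :=
      ENNReal.ofReal_le_ofReal hb1
    calc (ENNReal.ofReal (1 - (2:ℝ) ^ (-x)))⁻¹ ≤ (ENNReal.ofReal (x / 4))⁻¹ :=
          ENNReal.inv_le_inv' this
      _ = ENNReal.ofReal ((x / 4)⁻¹) := (ENNReal.ofReal_inv_of_pos (by linarith)).symm
      _ = ENNReal.ofReal (4 / x) := by rw [inv_div]
  calc ENNReal.ofReal a * (1 - ENNReal.ofReal ((2:ℝ) ^ (-x)))⁻¹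
      ≤ ENNReal.ofReal a * ENNReal.ofReal (4 / x) := by gcongr
    _ = ENNReal.ofReal (a * (4 / x)) := (ENNReal.ofReal_mul ha).symm
    _ = ENNReal.ofReal (4 * a / x) := by ring_nf

noncomputable def ker (N : ℕ) (α : ℝ) (z : EuclideanSpace ℝ (Fin N)) : ℝ≥0∞ :=
  ENNReal.ofReal (‖z‖ ^ (-((N : ℝ) + α)))

noncomputable def Dz {N : ℕ} (E : Set (EuclideanSpace ℝ (Fin N)))
    (z : EuclideanSpace ℝ (Fin N)) : ℝ≥0∞ :=
  volume (E ∩ (fun x => x - z) ⁻¹' Eᶜ)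

variable {N : ℕ}
local notation "ES" => EuclideanSpace ℝ (Fin N)

lemma ker_measurable (α : ℝ) : Measurable (ker N α) :=
  (measurable_norm.pow_const _).ennreal_ofReal

lemma ker_zero {α : ℝ} (hα : 0 < α) : ker N α (0 : ES) = 0 := by
  have h0 : -((N:ℝ) + α) ≠ 0 := by
    have : (0:ℝ) ≤ N := Nat.cast_nonneg N
    intro h; nlinarith
  unfold ker
  rw [norm_zero, Real.zero_rpow h0, ENNReal.ofReal_zero]

lemma ker_le {α b : ℝ} (hα : 0 < α) (hb : 0 < b) {z : ES} (hz : b ≤ ‖z‖) :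
    ker N α z ≤ ENNReal.ofReal (b ^ (-((N : ℝ) + α))) :=
  ENNReal.ofReal_le_ofReal <| Real.rpow_le_rpow_of_nonpos hb hz (by
    have : (0:ℝ) ≤ N := Nat.cast_nonneg N
    linarith)

lemma ker_ge {α b : ℝ} (hα : 0 < α) {z : ES} (hz0 : 0 < ‖z‖) (hz : ‖z‖ ≤ b) :
    ENNReal.ofReal (b ^ (-((N : ℝ) + α))) ≤ ker N α z :=
  ENNReal.ofReal_le_ofReal <| Real.rpow_le_rpow_of_nonpos hz0 hz (by
    have : (0:ℝ) ≤ N := Nat.cast_nonneg N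
    linarith)

lemma Dz_indicator {E : Set ES} (hE : MeasurableSet E) (z : ES) :
    Dz E z = ∫⁻ x, E.indicator (fun _ => (1:ℝ≥0∞)) x
      * Eᶜ.indicator (fun _ => (1:ℝ≥0∞)) (x - z) ∂volume := by
  have hmeas : MeasurableSet (E ∩ (fun x => x - z) ⁻¹' Eᶜ) :=
    hE.inter ((measurable_id.sub measurable_const) hE.compl)
  have hpt : ∀ x : ES, E.indicator (fun _ => (1:ℝ≥0∞)) x
      * Eᶜ.indicator (fun _ => (1:ℝ≥0∞)) (x - z)
      = (E ∩ (fun x => x - z) ⁻¹' Eᶜ).indicator (fun _ => (1:ℝ≥0∞)) x := by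
    intro x
    by_cases hx : x ∈ E <;> by_cases hxz : x - z ∈ E <;>
      simp [Set.indicator_apply, hx, hxz, Set.mem_inter_iff]
  rw [lintegral_congr hpt, lintegral_indicator hmeas]
  simp [Dz]

lemma Dz_measurable {E : Set ES} (hE : MeasurableSet E) : Measurable (Dz E) := by
  have : Measurable fun p : ES × ES => E.indicator (fun _ => (1:ℝ≥0∞)) p.2
      * Eᶜ.indicator (fun _ => (1:ℝ≥0∞)) (p.2 - p.1) := by
    exact ((measurable_one.indicator hE).comp measurable_snd).mul
      ((measurable_one.indicator hE.compl).comp (measurable_snd.sub measurable_fst))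
  have H := Measurable.lintegral_prod_right' (ν := (volume : Measure (EuclideanSpace ℝ (Fin N)))) this
  have : (fun z => ∫⁻ x, E.indicator (fun _ => (1:ℝ≥0∞)) x
      * Eᶜ.indicator (fun _ => (1:ℝ≥0∞)) (x - z) ∂volume) = Dz E := by
    funext z; rw [Dz_indicator hE z]
  rw [← this]
  exact H

lemma Dz_le (E : Set ES) (z : ES) : Dz E z ≤ volume E :=
  measure_mono inter_subset_left

lemma Dz_subadd (E : Set ES) (z w : ES) : Dz E (z + w) ≤ Dz E z + Dz E w := by
  have hsub : E ∩ (fun x => x - (z + w)) ⁻¹' Eᶜ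
      ⊆ (E ∩ (fun x => x - w) ⁻¹' Eᶜ) ∪ ((fun x => x - w) ⁻¹' (E ∩ (fun x => x - z) ⁻¹' Eᶜ)) := by
    rintro x ⟨hxE, hx⟩
    by_cases hw : x - w ∈ E
    · right
      refine ⟨hw, ?_⟩
      simpa [sub_sub, add_comm] using hx
    · left; exact ⟨hxE, hw⟩
  calc Dz E (z + w) ≤ volume ((E ∩ (fun x => x - w) ⁻¹' Eᶜ)
        ∪ ((fun x => x - w) ⁻¹' (E ∩ (fun x => x - z) ⁻¹' Eᶜ))) := measure_mono hsub
    _ ≤ Dz E w + volume ((fun x => x - w) ⁻¹' (E ∩ (fun x => x - z) ⁻¹' Eᶜ)) :=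
        measure_union_le _ _
    _ = Dz E w + Dz E z := by
        congr 1
        have : (fun x : ES => x - w) = fun x => x + (-w) := by funext x; rw [sub_eq_add_neg]
        rw [this, measure_preimage_add_right]
        rfl
    _ = Dz E z + Dz E w := add_comm _ _

lemma Dz_halve (E : Set ES) (z : ES) : Dz E z ≤ 2 * Dz E ((2:ℝ)⁻¹ • z) := by
  have h : z = (2:ℝ)⁻¹ • z + (2:ℝ)⁻¹ • z := by
    rw [← add_smul]; norm_num
  calc Dz E z = Dz E ((2:ℝ)⁻¹ • z + (2:ℝ)⁻¹ • z) := by rw [← h]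
    _ ≤ Dz E ((2:ℝ)⁻¹ • z) + Dz E ((2:ℝ)⁻¹ • z) := Dz_subadd E _ _
    _ = 2 * Dz E ((2:ℝ)⁻¹ • z) := (two_mul _).symm

lemma Dz_pow (E : Set ES) (j : ℕ) (z : ES) :
    Dz E z ≤ 2 ^ j * Dz E (((2:ℝ) ^ j)⁻¹ • z) := by
  induction j generalizing z with
  | zero => simp
  | succ n ih =>
    calc Dz E z ≤ 2 * Dz E ((2:ℝ)⁻¹ • z) := Dz_halve E z
      _ ≤ 2 * (2 ^ n * Dz E (((2:ℝ) ^ n)⁻¹ • ((2:ℝ)⁻¹ • z))) := by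
          gcongr
          exact ih ((2:ℝ)⁻¹ • z)
      _ = 2 ^ (n+1) * Dz E (((2:ℝ) ^ (n+1))⁻¹ • z) := by
          rw [smul_smul]
          ring_nf

lemma fracPer_eq (α : ℝ) {E : Set ES} (hE : MeasurableSet E) :
    fracPer N α E = ∫⁻ z, ker N α z * Dz E z ∂volume := by
  have hker : Measurable (ker N α) := ker_measurable α
  have inner : ∀ x : ES, (∫⁻ y in Eᶜ, ENNReal.ofReal (‖x - y‖ ^ (-((N:ℝ)+α))) ∂volume)
      = ∫⁻ z, Eᶜ.indicator (fun _ => (1:ℝ≥0∞)) (x - z) * ker N α z ∂volume := by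
    intro x
    have h2 : Measurable (Eᶜ.indicator (fun y => ker N α (x - y))) :=
      (hker.comp (measurable_const.sub measurable_id)).indicator hE.compl
    have h3 := (Measure.measurePreserving_sub_left (volume : Measure ES) x).lintegral_comp h2
    calc (∫⁻ y in Eᶜ, ENNReal.ofReal (‖x - y‖ ^ (-((N:ℝ)+α))) ∂volume)
        = ∫⁻ y, Eᶜ.indicator (fun y => ker N α (x - y)) y ∂volume :=
          (lintegral_indicator hE.compl _).symm
      _ = ∫⁻ z, Eᶜ.indicator (fun y => ker N α (x - y)) (x - z) ∂volume := h3.symm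
      _ = ∫⁻ z, Eᶜ.indicator (fun _ => (1:ℝ≥0∞)) (x - z) * ker N α z ∂volume := by
          refine lintegral_congr fun z => ?_
          by_cases hz : x - z ∈ Eᶜ
          · have hxz : x - (x - z) = z := by abel
            rw [Set.indicator_of_mem hz, Set.indicator_of_mem hz, hxz, one_mul]
          · rw [Set.indicator_of_notMem hz, Set.indicator_of_notMem hz, zero_mul]
  have hmeas : Measurable (Function.uncurry fun (x z : ES) =>
      E.indicator (fun _ => (1:ℝ≥0∞)) x
        * (Eᶜ.indicator (fun _ => (1:ℝ≥0∞)) (x - z) * ker N α z)) := by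
    exact ((measurable_one.indicator hE).comp measurable_fst).mul
      ((((measurable_one.indicator hE.compl).comp (measurable_fst.sub measurable_snd))).mul
        (hker.comp measurable_snd))
  calc fracPer N α E
      = ∫⁻ x in E, ∫⁻ z, Eᶜ.indicator (fun _ => (1:ℝ≥0∞)) (x - z) * ker N α z ∂volume ∂volume := by
        unfold fracPer interEnergy
        exact setLIntegral_congr_fun hE (fun x _ => inner x)
    _ = ∫⁻ x, ∫⁻ z, E.indicator (fun _ => (1:ℝ≥0∞)) x
          * (Eᶜ.indicator (fun _ => (1:ℝ≥0∞)) (x - z) * ker N α z) ∂volume ∂volume := by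
        rw [← lintegral_indicator hE]
        refine lintegral_congr fun x => ?_
        by_cases hx : x ∈ E
        · rw [Set.indicator_of_mem hx]
          refine lintegral_congr fun z => ?_
          rw [Set.indicator_of_mem hx, one_mul]
        · rw [Set.indicator_of_notMem hx]
          symm
          calc (∫⁻ z, E.indicator (fun _ => (1:ℝ≥0∞)) x
                * (Eᶜ.indicator (fun _ => (1:ℝ≥0∞)) (x - z) * ker N α z) ∂volume)
              = ∫⁻ _, 0 ∂(volume : Measure ES) := by
                refine lintegral_congr fun z => ?_
                rw [Set.indicator_of_notMem hx, zero_mul]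
            _ = 0 := lintegral_zero
    _ = ∫⁻ z, ∫⁻ x, E.indicator (fun _ => (1:ℝ≥0∞)) x
          * (Eᶜ.indicator (fun _ => (1:ℝ≥0∞)) (x - z) * ker N α z) ∂volume ∂volume :=
        lintegral_lintegral_swap hmeas.aemeasurable
    _ = ∫⁻ z, ker N α z * Dz E z ∂volume := by
        refine lintegral_congr fun z => ?_
        rw [Dz_indicator hE z]
        calc (∫⁻ x, E.indicator (fun _ => (1:ℝ≥0∞)) x
              * (Eᶜ.indicator (fun _ => (1:ℝ≥0∞)) (x - z) * ker N α z) ∂volume)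
            = ∫⁻ x, ker N α z * (E.indicator (fun _ => (1:ℝ≥0∞)) x
              * Eᶜ.indicator (fun _ => (1:ℝ≥0∞)) (x - z)) ∂volume :=
              lintegral_congr fun x => by ring
          _ = ker N α z * ∫⁻ x, E.indicator (fun _ => (1:ℝ≥0∞)) x
              * Eᶜ.indicator (fun _ => (1:ℝ≥0∞)) (x - z) ∂volume :=
              lintegral_const_mul _ (by
                exact ((measurable_one.indicator hE)).mul
                  ((measurable_one.indicator hE.compl).comp
                    (measurable_id.sub measurable_const)))

def Ann (N : ℕ) (a b : ℝ) : Set (EuclideanSpace ℝ (Fin N)) := {z | a < ‖z‖ ∧ ‖z‖ ≤ b}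

lemma measurableSet_Ann {a b : ℝ} : MeasurableSet (Ann N a b) := by
  have : Ann N a b = (fun z : ES => ‖z‖) ⁻¹' Ioc a b := rfl
  rw [this]
  exact measurable_norm measurableSet_Ioc

lemma Ann_subset_closedBall {a b : ℝ} : Ann N a b ⊆ closedBall (0:ES) b := fun z hz => by
  simpa [mem_closedBall, dist_zero_right] using hz.2

lemma Ann_disjoint {a b a' b' : ℝ} (h : b' ≤ a) : Disjoint (Ann N a b) (Ann N a' b') :=
  Set.disjoint_left.2 fun z hz hz' => absurd (hz'.2.trans h) (not_le.2 hz.1)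

lemma Ann_near_pairwise {r : ℝ} (hr : 0 < r) :
    Pairwise (Function.onFun Disjoint fun k : ℕ => Ann N (r / 2^(k+1)) (r / 2^k)) := by
  intro k l hkl
  rcases lt_or_gt_of_ne hkl with h | h
  · exact Ann_disjoint (by
      apply div_le_div_of_nonneg_left hr.le (by positivity)
      exact pow_le_pow_right₀ one_le_two h)
  · exact (Ann_disjoint (by
      apply div_le_div_of_nonneg_left hr.le (by positivity)
      exact pow_le_pow_right₀ one_le_two h)).symm

lemma smul_mem_Ann {c : ℝ} (hc : 0 < c) {z : ES} {a b : ℝ} :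
    c • z ∈ Ann N (c * a) (c * b) ↔ z ∈ Ann N a b := by
  simp only [Ann, mem_setOf_eq, norm_smul, Real.norm_eq_abs, abs_of_pos hc]
  rw [mul_lt_mul_iff_right₀ hc, mul_le_mul_iff_right₀ hc]

lemma cover_far {r : ℝ} (hr : 0 < r) :
    {z : ES | r < ‖z‖} ⊆ ⋃ k : ℕ, Ann N (2^k * r) (2^(k+1) * r) := by
  intro z hz
  simp only [mem_setOf_eq] at hz
  have hex : ∃ n : ℕ, ‖z‖ ≤ 2^(n+1) * r := by
    obtain ⟨n, hn⟩ := pow_unbounded_of_one_lt (‖z‖ / r) one_lt_two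
    refine ⟨n, ?_⟩
    rw [div_lt_iff₀ hr] at hn
    have h2 : (2:ℝ)^n ≤ 2^(n+1) := pow_le_pow_right₀ one_le_two (Nat.le_succ n)
    nlinarith
  classical
  set k := Nat.find hex with hk
  refine Set.mem_iUnion.2 ⟨k, ?_, Nat.find_spec hex⟩
  rcases Nat.eq_zero_or_pos k with h0 | h0
  · rw [h0]; simpa using hz
  · have := Nat.find_min hex (m := k - 1) (by omega)
    push_neg at this
    have hkk : k - 1 + 1 = k := by omega
    rw [hkk] at this
    linarith

lemma cover_near {r : ℝ} (hr : 0 < r) :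
    {z : ES | 0 < ‖z‖ ∧ ‖z‖ ≤ r} ⊆ ⋃ k : ℕ, Ann N (r / 2^(k+1)) (r / 2^k) := by
  intro z hz
  simp only [mem_setOf_eq] at hz
  obtain ⟨hz0, hzr⟩ := hz
  have hex : ∃ n : ℕ, r / 2^(n+1) < ‖z‖ := by
    obtain ⟨n, hn⟩ := pow_unbounded_of_one_lt (r / ‖z‖) one_lt_two
    refine ⟨n, ?_⟩
    rw [div_lt_iff₀ hz0] at hn
    rw [div_lt_iff₀ (by positivity)]
    have h2 : (2:ℝ)^n ≤ 2^(n+1) := pow_le_pow_right₀ one_le_two (Nat.le_succ n)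
    nlinarith
  classical
  set k := Nat.find hex with hk
  refine Set.mem_iUnion.2 ⟨k, Nat.find_spec hex, ?_⟩
  rcases Nat.eq_zero_or_pos k with h0 | h0
  · rw [h0]; simpa using hzr
  · have := Nat.find_min hex (m := k - 1) (by omega)
    push_neg at this
    have hkk : k - 1 + 1 = k := by omega
    rw [hkk] at this
    linarith

lemma lintegral_comp_smul (f : ES → ℝ≥0∞) (hf : Measurable f) {c : ℝ} (hc : c ≠ 0) :
    ∫⁻ z, f (c • z) ∂(volume : Measure ES)
      = ENNReal.ofReal (|c ^ N|⁻¹) * ∫⁻ z, f z ∂volume := by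
  have h1 : ∫⁻ z, f (c • z) ∂(volume : Measure ES)
      = ∫⁻ a, f a ∂(Measure.map (c • ·) (volume : Measure ES)) :=
    (lintegral_map hf (measurable_const_smul c)).symm
  rw [h1, Measure.map_addHaar_smul volume hc, lintegral_smul_measure,
    finrank_euclideanSpace_fin, abs_inv, smul_eq_mul]

lemma I_transfer {E : Set ES} (hE : MeasurableSet E) {r : ℝ} (hr : 0 < r) (k j : ℕ) :
    ∫⁻ z in Ann N (r / 2^(k+1)) (r / 2^k), Dz E z ∂volume
      ≤ ENNReal.ofReal (2 ^ (j*(N+1)))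
        * ∫⁻ z in Ann N (r / 2^(k+j+1)) (r / 2^(k+j)), Dz E z ∂volume := by
  set c : ℝ := ((2:ℝ) ^ j)⁻¹ with hcdef
  have hc : 0 < c := by positivity
  have key1 : ∫⁻ z in Ann N (r / 2^(k+1)) (r / 2^k), Dz E z ∂volume
      ≤ (2:ℝ≥0∞) ^ j * ∫⁻ z in Ann N (r / 2^(k+1)) (r / 2^k), Dz E (c • z) ∂volume :=
    calc ∫⁻ z in Ann N (r / 2^(k+1)) (r / 2^k), Dz E z ∂volume
        ≤ ∫⁻ z in Ann N (r / 2^(k+1)) (r / 2^k), (2:ℝ≥0∞) ^ j * Dz E (c • z) ∂volume :=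
          lintegral_mono fun z => Dz_pow E j z
      _ = (2:ℝ≥0∞) ^ j * ∫⁻ z in Ann N (r / 2^(k+1)) (r / 2^k), Dz E (c • z) ∂volume :=
          lintegral_const_mul _ (by exact (Dz_measurable hE).comp (measurable_const_smul c))
  have hset : ∀ z : ES, z ∈ Ann N (r / 2^(k+1)) (r / 2^k)
      ↔ c • z ∈ Ann N (r / 2^(k+j+1)) (r / 2^(k+j)) := by
    intro z
    have e1 : r / 2^(k+j+1) = c * (r / 2^(k+1)) := by
      rw [hcdef, inv_mul_eq_div, div_div, ← pow_add]
      try ring_nf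
    have e2 : r / 2^(k+j) = c * (r / 2^k) := by
      rw [hcdef, inv_mul_eq_div, div_div, ← pow_add]
      try ring_nf
    rw [e1, e2, smul_mem_Ann hc]
  have key2 : ∫⁻ z in Ann N (r / 2^(k+1)) (r / 2^k), Dz E (c • z) ∂volume
      = ENNReal.ofReal (2 ^ (j*N))
        * ∫⁻ z in Ann N (r / 2^(k+j+1)) (r / 2^(k+j)), Dz E z ∂volume := by
    rw [← lintegral_indicator measurableSet_Ann, ← lintegral_indicator measurableSet_Ann]
    have hpt : ∀ z : ES, (Ann N (r / 2^(k+1)) (r / 2^k)).indicator (fun z => Dz E (c • z)) z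
        = (Ann N (r / 2^(k+j+1)) (r / 2^(k+j))).indicator (Dz E) (c • z) := by
      intro z
      by_cases hz : z ∈ Ann N (r / 2^(k+1)) (r / 2^k)
      · rw [indicator_of_mem hz, indicator_of_mem ((hset z).1 hz)]
      · rw [indicator_of_notMem hz, indicator_of_notMem (fun h => hz ((hset z).2 h))]
    rw [lintegral_congr hpt,
      lintegral_comp_smul _ ((Dz_measurable hE).indicator measurableSet_Ann) hc.ne']
    have habs : |c ^ N|⁻¹ = (2:ℝ) ^ (j*N) := by
      rw [hcdef, inv_pow, abs_inv, inv_inv, abs_of_pos (by positivity), ← pow_mul]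
    rw [habs]
  have h2 : (2:ℝ≥0∞)^j * ENNReal.ofReal ((2:ℝ)^(j*N)) = ENNReal.ofReal ((2:ℝ)^(j*(N+1))) := by
    have e1 : (2:ℝ≥0∞)^j = ENNReal.ofReal ((2:ℝ)^j) := by
      rw [ENNReal.ofReal_pow (by norm_num)]; norm_num
    rw [e1, ← ENNReal.ofReal_mul (by positivity)]
    congr 1
    rw [← pow_add]
    congr 1
    ring
  calc ∫⁻ z in Ann N (r / 2^(k+1)) (r / 2^k), Dz E z ∂volume
      ≤ (2:ℝ≥0∞) ^ j * ∫⁻ z in Ann N (r / 2^(k+1)) (r / 2^k), Dz E (c • z) ∂volume := key1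
    _ = (2:ℝ≥0∞) ^ j * (ENNReal.ofReal (2 ^ (j*N))
        * ∫⁻ z in Ann N (r / 2^(k+j+1)) (r / 2^(k+j)), Dz E z ∂volume) := by rw [key2]
    _ = ENNReal.ofReal (2 ^ (j*(N+1)))
        * ∫⁻ z in Ann N (r / 2^(k+j+1)) (r / 2^(k+j)), Dz E z ∂volume := by
        rw [← mul_assoc, h2]

lemma pow_rpow_comm (k : ℕ) (e : ℝ) : ((2:ℝ)^k)^e = ((2:ℝ)^e)^k := by
  rw [← Real.rpow_natCast 2 k, ← Real.rpow_mul (by norm_num), mul_comm,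
    Real.rpow_mul (by norm_num), Real.rpow_natCast]

lemma I_bound {E : Set ES} (hE : MeasurableSet E) {r t : ℝ} (hr : 0 < r)
    (ht0 : 0 < t) (ht1 : t < 1) (k : ℕ) :
    ∫⁻ z in Ann N (r / 2^(k+1)) (r / 2^k), Dz E z ∂volume
      ≤ ENNReal.ofReal ((r / 2^k) ^ ((N:ℝ) + t)) * (ENNReal.ofReal (1 - t) * fracPer N t E) := by
  set I : ℕ → ℝ≥0∞ := fun n => ∫⁻ z in Ann N (r / 2^(n+1)) (r / 2^n), Dz E z ∂volume with hI
  set ρ : ℝ := r / 2^k with hρ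
  have hρ0 : 0 < ρ := by positivity
  have hdisj : Pairwise (Function.onFun Disjoint
      fun j : ℕ => Ann N (r / 2^(k+j+1)) (r / 2^(k+j))) :=
    fun i j hij => Ann_near_pairwise (N := N) hr (show k+i ≠ k+j by omega)
  have hterm : ∀ j : ℕ, ENNReal.ofReal ((r / 2^(k+j)) ^ (-((N:ℝ)+t))) * I (k+j)
      ≤ ∫⁻ z in Ann N (r / 2^(k+j+1)) (r / 2^(k+j)), ker N t z * Dz E z ∂volume := by
    intro j
    have heq : ENNReal.ofReal ((r / 2^(k+j)) ^ (-((N:ℝ)+t))) * I (k+j)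
        = ∫⁻ z in Ann N (r / 2^(k+j+1)) (r / 2^(k+j)),
            ENNReal.ofReal ((r / 2^(k+j)) ^ (-((N:ℝ)+t))) * Dz E z ∂volume :=
      (lintegral_const_mul _ (Dz_measurable hE)).symm
    rw [heq]
    refine lintegral_mono_ae ((ae_restrict_iff' measurableSet_Ann).2
      (Filter.Eventually.of_forall fun z hz => ?_))
    have hz1 : 0 < ‖z‖ := lt_of_le_of_lt (by positivity) hz.1
    exact mul_le_mul_left (ker_ge ht0 hz1 hz.2) _
  have hsum : ∑' j : ℕ, ENNReal.ofReal ((r / 2^(k+j)) ^ (-((N:ℝ)+t))) * I (k+j)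
      ≤ fracPer N t E :=
    calc ∑' j : ℕ, ENNReal.ofReal ((r / 2^(k+j)) ^ (-((N:ℝ)+t))) * I (k+j)
        ≤ ∑' j : ℕ, ∫⁻ z in Ann N (r / 2^(k+j+1)) (r / 2^(k+j)),
            ker N t z * Dz E z ∂volume := ENNReal.tsum_le_tsum hterm
      _ = ∫⁻ z in ⋃ j : ℕ, Ann N (r / 2^(k+j+1)) (r / 2^(k+j)),
            ker N t z * Dz E z ∂volume :=
          (lintegral_iUnion (fun _ => measurableSet_Ann) hdisj _).symm
      _ ≤ ∫⁻ z, ker N t z * Dz E z ∂volume := setLIntegral_le_lintegral _ _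
      _ = fracPer N t E := (fracPer_eq t hE).symm
  set q : ℝ := (2:ℝ) ^ (t - 1) with hq
  have hq0 : 0 ≤ q := Real.rpow_nonneg (by norm_num) _
  have hd : ∀ j : ℕ, ρ ^ (-((N:ℝ)+t)) * q ^ j * 2^(j*(N+1))
      = (r / 2^(k+j)) ^ (-((N:ℝ)+t)) := by
    intro j
    have e0 : r / 2^(k+j) = ρ * ((2:ℝ)^j)⁻¹ := by
      rw [hρ]
      field_simp [pow_add]
      ring
    have hinv : (((2:ℝ)^j)⁻¹) ^ (-((N:ℝ)+t)) = ((2:ℝ)^j) ^ ((N:ℝ)+t) := by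
      rw [Real.inv_rpow (by positivity), Real.rpow_neg (by positivity), inv_inv]
    have e1 : (r / 2^(k+j)) ^ (-((N:ℝ)+t))
        = ρ ^ (-((N:ℝ)+t)) * ((2:ℝ)^j) ^ ((N:ℝ)+t) := by
      rw [e0, Real.mul_rpow hρ0.le (by positivity), hinv]
    have e2 : ((2:ℝ)^j) ^ ((N:ℝ)+t) = q ^ j * 2^(j*(N+1)) := by
      have e3 : ((2:ℝ)^j) ^ ((N:ℝ)+t)
          = ((2:ℝ)^j) ^ (t - 1) * ((2:ℝ)^j) ^ (((N+1:ℕ):ℝ)) := by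
        rw [← Real.rpow_add (by positivity)]
        congr 1
        push_cast
        ring
      rw [e3, pow_rpow_comm j (t-1), Real.rpow_natCast, ← pow_mul]
    rw [e1, e2]
    ring
  have htrans : ∀ j : ℕ, ENNReal.ofReal (ρ ^ (-((N:ℝ)+t)) * q ^ j) * I k
      ≤ ENNReal.ofReal ((r / 2^(k+j)) ^ (-((N:ℝ)+t))) * I (k+j) := by
    intro j
    calc ENNReal.ofReal (ρ ^ (-((N:ℝ)+t)) * q ^ j) * I k
        ≤ ENNReal.ofReal (ρ ^ (-((N:ℝ)+t)) * q ^ j)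
            * (ENNReal.ofReal (2 ^ (j*(N+1))) * I (k+j)) :=
          mul_le_mul_right (I_transfer hE hr k j) _
      _ = ENNReal.ofReal (ρ ^ (-((N:ℝ)+t)) * q ^ j * 2^(j*(N+1))) * I (k+j) := by
          rw [← mul_assoc, ← ENNReal.ofReal_mul (by positivity)]
      _ = ENNReal.ofReal ((r / 2^(k+j)) ^ (-((N:ℝ)+t))) * I (k+j) := by rw [hd j]
  have hsum2 : (∑' j : ℕ, ENNReal.ofReal (ρ ^ (-((N:ℝ)+t)) * q ^ j)) * I k
      ≤ fracPer N t E := by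
    rw [← ENNReal.tsum_mul_right]
    exact le_trans (ENNReal.tsum_le_tsum htrans) hsum
  have hgeom : (∑' j : ℕ, ENNReal.ofReal (ρ ^ (-((N:ℝ)+t)) * q ^ j))
      = ENNReal.ofReal (ρ ^ (-((N:ℝ)+t))) * (1 - ENNReal.ofReal q)⁻¹ := by
    have hterm2 : ∀ j : ℕ, ENNReal.ofReal (ρ ^ (-((N:ℝ)+t)) * q ^ j)
        = ENNReal.ofReal (ρ ^ (-((N:ℝ)+t))) * (ENNReal.ofReal q) ^ j := fun j => by
      rw [ENNReal.ofReal_mul (by positivity), ENNReal.ofReal_pow hq0]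
    rw [tsum_congr hterm2, ENNReal.tsum_mul_left, ENNReal.tsum_geometric]
  have hcoef : ENNReal.ofReal (ρ ^ (-((N:ℝ)+t))) * (ENNReal.ofReal (1-t))⁻¹
      ≤ ENNReal.ofReal (ρ ^ (-((N:ℝ)+t))) * (1 - ENNReal.ofReal q)⁻¹ := by
    apply mul_le_mul_right
    apply ENNReal.inv_le_inv'
    have h1 : 1 - ENNReal.ofReal q = ENNReal.ofReal (1 - q) := by
      rw [ENNReal.ofReal_sub _ hq0, ENNReal.ofReal_one]
    rw [h1]
    apply ENNReal.ofReal_le_ofReal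
    have hx : t - 1 = -(1 - t) := by ring
    have := (two_rpow_neg_bounds (x := 1 - t) (by linarith) (by linarith)).2
    rw [hq, hx]
    linarith
  have hkey : ENNReal.ofReal (ρ ^ (-((N:ℝ)+t))) * (ENNReal.ofReal (1-t))⁻¹ * I k
      ≤ fracPer N t E := by
    refine le_trans (mul_le_mul_left hcoef _) ?_
    rw [← hgeom] at *
    exact hsum2
  set a := ENNReal.ofReal (ρ ^ (-((N:ℝ)+t))) with hadef
  set b := ENNReal.ofReal (1-t) with hbdef
  have ha0 : a ≠ 0 := by
    rw [hadef]
    simp only [ne_eq, ENNReal.ofReal_eq_zero, not_le]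
    positivity
  have hatop : a ≠ ⊤ := ENNReal.ofReal_ne_top
  have hb0 : b ≠ 0 := by
    rw [hbdef]
    simp only [ne_eq, ENNReal.ofReal_eq_zero, not_le]
    linarith
  have hbtop : b ≠ ⊤ := ENNReal.ofReal_ne_top
  have hainv : a⁻¹ = ENNReal.ofReal (ρ ^ ((N:ℝ)+t)) := by
    rw [hadef, ← ENNReal.ofReal_inv_of_pos (by positivity), Real.rpow_neg hρ0.le, inv_inv]
  have hcancel : I k = a⁻¹ * b * (a * b⁻¹ * I k) := by
    have : a⁻¹ * b * (a * b⁻¹ * I k) = (a⁻¹ * a) * (b * b⁻¹) * I k := by ring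
    rw [this, ENNReal.inv_mul_cancel ha0 hatop, ENNReal.mul_inv_cancel hb0 hbtop,
      one_mul, one_mul]
  calc I k = a⁻¹ * b * (a * b⁻¹ * I k) := hcancel
    _ ≤ a⁻¹ * b * fracPer N t E := by
        apply mul_le_mul_right
        have : a * b⁻¹ * I k = a * (b⁻¹ * I k) := by ring
        calc a * b⁻¹ * I k = a * b⁻¹ * I k := rfl
          _ ≤ fracPer N t E := hkey
    _ = ENNReal.ofReal ((r / 2^k) ^ ((N:ℝ)+t)) * (b * fracPer N t E) := by
        rw [hainv, mul_assoc, ← hρ]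

lemma far_bound {E : Set ES} (hE : MeasurableSet E) {r s : ℝ} (hr : 0 < r)
    (hs : 0 < s) (hs1 : s ≤ 1) :
    ∫⁻ z in {z : ES | r < ‖z‖}, ker N s z * Dz E z ∂volume
      ≤ ENNReal.ofReal (4 * ((2:ℝ)^N * (volume (ball (0:ES) 1)).toReal * r ^ (-s)) / s)
          * volume E := by
  set Vr := (volume (ball (0:ES) 1)).toReal with hVr
  have hV : volume (ball (0:ES) 1) = ENNReal.ofReal Vr :=
    (ENNReal.ofReal_toReal (measure_ball_lt_top (x := (0:ES)) (r := 1)).ne).symm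
  have hVr0 : (0:ℝ) ≤ Vr := ENNReal.toReal_nonneg
  have hterm : ∀ k : ℕ, ∫⁻ z in Ann N (2^k * r) (2^(k+1) * r), ker N s z * Dz E z ∂volume
      ≤ ENNReal.ofReal (((2:ℝ)^N * Vr * r ^ (-s)) * ((2:ℝ)^(-s))^k) * volume E := by
    intro k
    have hb : (0:ℝ) < 2^k * r := by positivity
    have hb2 : (0:ℝ) ≤ 2^(k+1) * r := by positivity
    have id1 : (((2:ℝ)^k * r) ^ (-((N:ℝ)+s))) * (((2:ℝ)^(k+1) * r)^N * Vr)
        = ((2:ℝ)^N * Vr * r ^ (-s)) * ((2:ℝ)^(-s))^k := by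
      have h1 : ((2:ℝ)^(k+1) * r)^N = 2^N * ((2:ℝ)^k * r)^N := by
        rw [show (2:ℝ)^(k+1) * r = 2 * ((2:ℝ)^k * r) by ring, mul_pow]
      have h2 : (((2:ℝ)^k * r) ^ (-((N:ℝ)+s))) * ((2:ℝ)^k * r)^N
          = ((2:ℝ)^k * r) ^ (-s) := by
        rw [← Real.rpow_natCast ((2:ℝ)^k * r) N, ← Real.rpow_add hb]
        congr 1
        ring
      have h3 : ((2:ℝ)^k * r) ^ (-s) = ((2:ℝ)^(-s))^k * r ^ (-s) := by
        rw [Real.mul_rpow (by positivity) hr.le, pow_rpow_comm]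
      calc (((2:ℝ)^k * r) ^ (-((N:ℝ)+s))) * (((2:ℝ)^(k+1) * r)^N * Vr)
          = ((((2:ℝ)^k * r) ^ (-((N:ℝ)+s))) * ((2:ℝ)^k * r)^N) * ((2:ℝ)^N * Vr) := by
            rw [h1]; ring
        _ = ((2:ℝ)^k * r) ^ (-s) * ((2:ℝ)^N * Vr) := by rw [h2]
        _ = ((2:ℝ)^N * Vr * r ^ (-s)) * ((2:ℝ)^(-s))^k := by rw [h3]; ring
    calc ∫⁻ z in Ann N (2^k * r) (2^(k+1) * r), ker N s z * Dz E z ∂volume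
        ≤ ∫⁻ _ in Ann N (2^k * r) (2^(k+1) * r),
            ENNReal.ofReal (((2:ℝ)^k * r) ^ (-((N:ℝ)+s))) * volume E ∂volume := by
          refine lintegral_mono_ae ((ae_restrict_iff' measurableSet_Ann).2
            (Filter.Eventually.of_forall fun z hz => ?_))
          exact mul_le_mul' (ker_le hs hb hz.1.le) (Dz_le E z)
      _ = ENNReal.ofReal (((2:ℝ)^k * r) ^ (-((N:ℝ)+s))) * volume E
            * volume (Ann N (2^k * r) (2^(k+1) * r)) := setLIntegral_const _ _
      _ ≤ ENNReal.ofReal (((2:ℝ)^k * r) ^ (-((N:ℝ)+s))) * volume E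
            * volume (closedBall (0:ES) (2^(k+1) * r)) :=
          mul_le_mul_right (measure_mono Ann_subset_closedBall) _
      _ = ENNReal.ofReal (((2:ℝ)^k * r) ^ (-((N:ℝ)+s))) * volume E
            * (ENNReal.ofReal (((2:ℝ)^(k+1) * r)^N) * ENNReal.ofReal Vr) := by
          rw [Measure.addHaar_closedBall volume _ hb2, finrank_euclideanSpace_fin, hV]
      _ = ENNReal.ofReal (((2:ℝ)^k * r) ^ (-((N:ℝ)+s)) * (((2:ℝ)^(k+1) * r)^N * Vr))
            * volume E := by
          rw [ENNReal.ofReal_mul (by positivity), ENNReal.ofReal_mul (by positivity)]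
          ring
      _ = ENNReal.ofReal (((2:ℝ)^N * Vr * r ^ (-s)) * ((2:ℝ)^(-s))^k) * volume E := by
          rw [id1]
  calc ∫⁻ z in {z : ES | r < ‖z‖}, ker N s z * Dz E z ∂volume
      ≤ ∫⁻ z in ⋃ k : ℕ, Ann N (2^k * r) (2^(k+1) * r), ker N s z * Dz E z ∂volume :=
        lintegral_mono_set (cover_far hr)
    _ ≤ ∑' k : ℕ, ∫⁻ z in Ann N (2^k * r) (2^(k+1) * r), ker N s z * Dz E z ∂volume :=
        lintegral_iUnion_le _ _
    _ ≤ ∑' k : ℕ, ENNReal.ofReal (((2:ℝ)^N * Vr * r ^ (-s)) * ((2:ℝ)^(-s))^k) * volume E :=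
        ENNReal.tsum_le_tsum hterm
    _ = (∑' k : ℕ, ENNReal.ofReal (((2:ℝ)^N * Vr * r ^ (-s)) * ((2:ℝ)^(-s))^k)) * volume E :=
        ENNReal.tsum_mul_right
    _ ≤ ENNReal.ofReal (4 * ((2:ℝ)^N * Vr * r ^ (-s)) / s) * volume E :=
        mul_le_mul_left (tsum_ofReal_geom (by positivity) hs hs1) _

lemma near_bound {E : Set ES} (hE : MeasurableSet E) {r s t : ℝ} (hr : 0 < r)
    (hs : 0 < s) (hst : s < t) (ht1 : t < 1) :
    ∫⁻ z in {z : ES | 0 < ‖z‖ ∧ ‖z‖ ≤ r}, ker N s z * Dz E z ∂volume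
      ≤ ENNReal.ofReal (4 * ((2:ℝ)^((N:ℝ)+1) * r ^ (t-s)) / (t-s))
          * (ENNReal.ofReal (1-t) * fracPer N t E) := by
  have ht0 : 0 < t := lt_trans hs hst
  have hts : 0 < t - s := by linarith
  have hts1 : t - s ≤ 1 := by linarith
  set Q : ℝ≥0∞ := ENNReal.ofReal (1-t) * fracPer N t E with hQdef
  have hterm : ∀ k : ℕ, ∫⁻ z in Ann N (r / 2^(k+1)) (r / 2^k), ker N s z * Dz E z ∂volume
      ≤ ENNReal.ofReal (((2:ℝ)^((N:ℝ)+1) * r ^ (t-s)) * ((2:ℝ)^(-(t-s)))^k) * Q := by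
    intro k
    have hρ0 : (0:ℝ) < r / 2^(k+1) := by positivity
    have w_id : (r / 2^(k+1)) ^ (-((N:ℝ)+s)) * (r / 2^k) ^ ((N:ℝ)+t)
        = ((2:ℝ)^((N:ℝ)+t) * ((2:ℝ)^(-(t-s))) * r ^ (t-s)) * ((2:ℝ)^(-(t-s)))^k := by
      have e0 : r / 2^k = 2 * (r / 2^(k+1)) := by
        field_simp [pow_succ]
        ring
      have e1 : (r / 2^k) ^ ((N:ℝ)+t)
          = (2:ℝ)^((N:ℝ)+t) * (r / 2^(k+1)) ^ ((N:ℝ)+t) := by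
        rw [e0, Real.mul_rpow (by norm_num) hρ0.le]
      have e2 : (r / 2^(k+1)) ^ (-((N:ℝ)+s)) * (r / 2^(k+1)) ^ ((N:ℝ)+t)
          = (r / 2^(k+1)) ^ (t-s) := by
        rw [← Real.rpow_add hρ0]
        congr 1
        ring
      have e3 : (r / 2^(k+1)) ^ (t-s)
          = r ^ (t-s) * (((2:ℝ)^(-(t-s)))^(k+1)) := by
        rw [Real.div_rpow hr.le (by positivity), pow_rpow_comm (k+1) (t-s)]
        rw [div_eq_mul_inv, ← inv_pow]
        congr 2
        rw [← Real.rpow_neg_one ((2:ℝ)^(t-s)), ← Real.rpow_mul (by norm_num)]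
        congr 1
        ring
      calc (r / 2^(k+1)) ^ (-((N:ℝ)+s)) * (r / 2^k) ^ ((N:ℝ)+t)
          = (2:ℝ)^((N:ℝ)+t) * ((r / 2^(k+1)) ^ (-((N:ℝ)+s)) * (r / 2^(k+1)) ^ ((N:ℝ)+t)) := by
            rw [e1]; ring
        _ = (2:ℝ)^((N:ℝ)+t) * (r / 2^(k+1)) ^ (t-s) := by rw [e2]
        _ = (2:ℝ)^((N:ℝ)+t) * (r ^ (t-s) * (((2:ℝ)^(-(t-s)))^(k+1))) := by rw [e3]
        _ = ((2:ℝ)^((N:ℝ)+t) * ((2:ℝ)^(-(t-s))) * r ^ (t-s)) * ((2:ℝ)^(-(t-s)))^k := by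
            rw [pow_succ]
            ring
    have w_le : (r / 2^(k+1)) ^ (-((N:ℝ)+s)) * (r / 2^k) ^ ((N:ℝ)+t)
        ≤ ((2:ℝ)^((N:ℝ)+1) * r ^ (t-s)) * ((2:ℝ)^(-(t-s)))^k := by
      rw [w_id]
      have b1 : (2:ℝ)^((N:ℝ)+t) ≤ (2:ℝ)^((N:ℝ)+1) :=
        Real.rpow_le_rpow_of_exponent_le one_le_two (by linarith)
      have b2 : (2:ℝ)^(-(t-s)) ≤ 1 :=
        Real.rpow_le_one_of_one_le_of_nonpos one_le_two (by linarith)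
      have b3 : (0:ℝ) ≤ r ^ (t-s) := Real.rpow_nonneg hr.le _
      have b4 : (0:ℝ) ≤ ((2:ℝ)^(-(t-s)))^k := by positivity
      have b5 : (0:ℝ) ≤ (2:ℝ)^((N:ℝ)+t) := Real.rpow_nonneg (by norm_num) _
      have key : (2:ℝ)^((N:ℝ)+t) * (2:ℝ)^(-(t-s)) ≤ (2:ℝ)^((N:ℝ)+1) := by nlinarith
      calc (2:ℝ)^((N:ℝ)+t) * ((2:ℝ)^(-(t-s))) * r ^ (t-s) * ((2:ℝ)^(-(t-s)))^k
          = ((2:ℝ)^((N:ℝ)+t) * (2:ℝ)^(-(t-s))) * (r ^ (t-s) * ((2:ℝ)^(-(t-s)))^k) := by ring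
        _ ≤ (2:ℝ)^((N:ℝ)+1) * (r ^ (t-s) * ((2:ℝ)^(-(t-s)))^k) :=
            mul_le_mul_of_nonneg_right key (by positivity)
        _ = (2:ℝ)^((N:ℝ)+1) * r ^ (t-s) * ((2:ℝ)^(-(t-s)))^k := by ring
    calc ∫⁻ z in Ann N (r / 2^(k+1)) (r / 2^k), ker N s z * Dz E z ∂volume
        ≤ ∫⁻ z in Ann N (r / 2^(k+1)) (r / 2^k),
            ENNReal.ofReal ((r / 2^(k+1)) ^ (-((N:ℝ)+s))) * Dz E z ∂volume := by
          refine lintegral_mono_ae ((ae_restrict_iff' measurableSet_Ann).2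
            (Filter.Eventually.of_forall fun z hz => ?_))
          exact mul_le_mul_left (ker_le hs hρ0 hz.1.le) _
      _ = ENNReal.ofReal ((r / 2^(k+1)) ^ (-((N:ℝ)+s)))
            * ∫⁻ z in Ann N (r / 2^(k+1)) (r / 2^k), Dz E z ∂volume :=
          lintegral_const_mul _ (Dz_measurable hE)
      _ ≤ ENNReal.ofReal ((r / 2^(k+1)) ^ (-((N:ℝ)+s)))
            * (ENNReal.ofReal ((r / 2^k) ^ ((N:ℝ) + t)) * Q) :=
          mul_le_mul_right (I_bound hE hr ht0 ht1 k) _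
      _ = ENNReal.ofReal ((r / 2^(k+1)) ^ (-((N:ℝ)+s)) * (r / 2^k) ^ ((N:ℝ) + t)) * Q := by
          rw [← mul_assoc, ← ENNReal.ofReal_mul (by positivity)]
      _ ≤ ENNReal.ofReal (((2:ℝ)^((N:ℝ)+1) * r ^ (t-s)) * ((2:ℝ)^(-(t-s)))^k) * Q :=
          mul_le_mul_left (ENNReal.ofReal_le_ofReal w_le) _
  calc ∫⁻ z in {z : ES | 0 < ‖z‖ ∧ ‖z‖ ≤ r}, ker N s z * Dz E z ∂volume
      ≤ ∫⁻ z in ⋃ k : ℕ, Ann N (r / 2^(k+1)) (r / 2^k), ker N s z * Dz E z ∂volume :=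
        lintegral_mono_set (cover_near hr)
    _ ≤ ∑' k : ℕ, ∫⁻ z in Ann N (r / 2^(k+1)) (r / 2^k), ker N s z * Dz E z ∂volume :=
        lintegral_iUnion_le _ _
    _ ≤ ∑' k : ℕ, ENNReal.ofReal (((2:ℝ)^((N:ℝ)+1) * r ^ (t-s)) * ((2:ℝ)^(-(t-s)))^k) * Q :=
        ENNReal.tsum_le_tsum hterm
    _ = (∑' k : ℕ, ENNReal.ofReal (((2:ℝ)^((N:ℝ)+1) * r ^ (t-s)) * ((2:ℝ)^(-(t-s)))^k)) * Q :=
        ENNReal.tsum_mul_right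
    _ ≤ ENNReal.ofReal (4 * ((2:ℝ)^((N:ℝ)+1) * r ^ (t-s)) / (t-s)) * Q :=
        mul_le_mul_left (tsum_ofReal_geom (by positivity) hts hts1) _

lemma master (hN : 0 < N) {E : Set ES} (hE : MeasurableSet E) {r s t : ℝ} (hr : 0 < r)
    (hs : 0 < s) (hs1 : s ≤ 1) (hst : s < t) (ht1 : t < 1) :
    fracPer N s E
      ≤ ENNReal.ofReal (4 * ((2:ℝ)^N * (volume (ball (0:ES) 1)).toReal * r ^ (-s)) / s)
          * volume E
        + ENNReal.ofReal (4 * ((2:ℝ)^((N:ℝ)+1) * r ^ (t-s)) / (t-s))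
          * (ENNReal.ofReal (1-t) * fracPer N t E) := by
  haveI : Nonempty (Fin N) := ⟨⟨0, hN⟩⟩
  have hsplit : ∀ (A B : Set ES) (f : ES → ℝ≥0∞),
      ∫⁻ z in A ∪ B, f z ∂volume ≤ ∫⁻ z in A, f z ∂volume + ∫⁻ z in B, f z ∂volume := by
    intro A B f
    calc ∫⁻ z in A ∪ B, f z ∂volume
        ≤ ∫⁻ z, f z ∂(volume.restrict A + volume.restrict B) :=
          lintegral_mono' (Measure.restrict_union_le _ _) le_rfl
      _ = ∫⁻ z in A, f z ∂volume + ∫⁻ z in B, f z ∂volume := lintegral_add_measure _ _ _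
  have hcover : (univ : Set ES) ⊆ {z : ES | 0 < ‖z‖ ∧ ‖z‖ ≤ r}
      ∪ ({z : ES | r < ‖z‖} ∪ {(0:ES)}) := by
    intro z _
    rcases lt_or_ge r ‖z‖ with h | h
    · exact Or.inr (Or.inl h)
    · rcases eq_or_lt_of_le (norm_nonneg z) with h0 | h0
      · right; right
        simp [norm_eq_zero.1 h0.symm]
      · exact Or.inl ⟨h0, h⟩
  have hzero : ∫⁻ z in ({(0:ES)} : Set ES), ker N s z * Dz E z ∂volume = 0 :=
    setLIntegral_measure_zero _ _ (measure_singleton 0)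
  calc fracPer N s E = ∫⁻ z, ker N s z * Dz E z ∂volume := fracPer_eq s hE
    _ = ∫⁻ z in (univ : Set ES), ker N s z * Dz E z ∂volume := by rw [Measure.restrict_univ]
    _ ≤ ∫⁻ z in {z : ES | 0 < ‖z‖ ∧ ‖z‖ ≤ r}
          ∪ ({z : ES | r < ‖z‖} ∪ {(0:ES)}), ker N s z * Dz E z ∂volume :=
        lintegral_mono_set hcover
    _ ≤ (∫⁻ z in {z : ES | 0 < ‖z‖ ∧ ‖z‖ ≤ r}, ker N s z * Dz E z ∂volume)
          + ∫⁻ z in {z : ES | r < ‖z‖} ∪ {(0:ES)}, ker N s z * Dz E z ∂volume :=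
        hsplit _ _ _
    _ ≤ (∫⁻ z in {z : ES | 0 < ‖z‖ ∧ ‖z‖ ≤ r}, ker N s z * Dz E z ∂volume)
          + ((∫⁻ z in {z : ES | r < ‖z‖}, ker N s z * Dz E z ∂volume)
            + ∫⁻ z in ({(0:ES)} : Set ES), ker N s z * Dz E z ∂volume) := by
        gcongr
        exact hsplit _ _ _
    _ = (∫⁻ z in {z : ES | 0 < ‖z‖ ∧ ‖z‖ ≤ r}, ker N s z * Dz E z ∂volume)
          + (∫⁻ z in {z : ES | r < ‖z‖}, ker N s z * Dz E z ∂volume) := by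
        rw [hzero, add_zero]
    _ ≤ ENNReal.ofReal (4 * ((2:ℝ)^((N:ℝ)+1) * r ^ (t-s)) / (t-s))
          * (ENNReal.ofReal (1-t) * fracPer N t E)
        + ENNReal.ofReal (4 * ((2:ℝ)^N * (volume (ball (0:ES) 1)).toReal * r ^ (-s)) / s)
          * volume E := by
        gcongr
        · exact near_bound hE hr hs hst ht1
        · exact far_bound hE hr hs hs1
    _ = _ := add_comm _ _

/-- Interpolation estimate:
`P_s(E) ≤ c_N (1/s) (1-s/t)⁻¹ |E|^{1-s/t} ((1-t) P_t(E))^{s/t}` in `[0,∞]`. -/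
theorem stmt2 (N : ℕ) (hN : 0 < N) :
    ∃ c : ℝ, 0 < c ∧ ∀ s t : ℝ, 0 < s → s < t → t < 1 →
      ∀ E : Set (EuclideanSpace ℝ (Fin N)), MeasurableSet E → volume E < ⊤ →
        fracPer N s E ≤ ENNReal.ofReal (c * (1 / s) * (1 - s / t)⁻¹) *
          (volume E) ^ (1 - s / t) *
          (ENNReal.ofReal (1 - t) * fracPer N t E) ^ (s / t) := by

  classical
  set Vr : ℝ := (volume (ball (0:EuclideanSpace ℝ (Fin N)) 1)).toReal with hVrdef
  have hVr0 : (0:ℝ) ≤ Vr := ENNReal.toReal_nonneg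
  refine ⟨2^(N+3) * (Vr + 1), by positivity, ?_⟩
  intro s t hs hst ht1 E hE hEfin
  set C : ℝ := 2^(N+3) * (Vr + 1) with hCdef
  have ht0 : 0 < t := lt_trans hs hst
  have hst' : s / t < 1 := (div_lt_one ht0).2 hst
  have hθ : 0 < 1 - s / t := by linarith
  have hθ' : 0 < s / t := by positivity
  have hCpos : (0:ℝ) < C := by positivity
  have hcpos : 0 < C * (1 / s) * (1 - s / t)⁻¹ := by positivity
  rcases eq_or_ne (volume E) 0 with hm0 | hm0
  · have h0 : fracPer N s E = 0 := by
      unfold fracPer interEnergy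
      exact setLIntegral_measure_zero _ _ hm0
    rw [h0]; exact zero_le
  rcases eq_or_ne (fracPer N t E) 0 with hP0 | hP0
  · have hPs : fracPer N s E = 0 := by
      rw [fracPer_eq s hE]
      rw [fracPer_eq t hE] at hP0
      have hmt : Measurable fun z : EuclideanSpace ℝ (Fin N) => ker N t z * Dz E z :=
        (ker_measurable t).mul (Dz_measurable hE)
      have hms : Measurable fun z : EuclideanSpace ℝ (Fin N) => ker N s z * Dz E z :=
        (ker_measurable s).mul (Dz_measurable hE)
      have hae := (lintegral_eq_zero_iff hmt).1 hP0
      rw [lintegral_eq_zero_iff hms]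
      refine hae.mono fun z hz => ?_
      simp only [Pi.zero_apply] at hz ⊢
      rcases mul_eq_zero.1 hz with h | h
      · have hz0 : z = 0 := by
          by_contra hne
          have hpos : 0 < ‖z‖ := norm_pos_iff.2 hne
          have h2 : 0 < ‖z‖ ^ (-((N:ℝ)+t)) := Real.rpow_pos_of_pos hpos _
          have h3 := ENNReal.ofReal_eq_zero.1 h
          linarith
        rw [hz0, ker_zero hs, zero_mul]
      · rw [h, mul_zero]
    rw [hPs]; exact zero_le
  have hone_t : (0:ℝ) < 1 - t := by linarith
  have hofreal1t : ENNReal.ofReal (1-t) ≠ 0 := by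
    simp only [ne_eq, ENNReal.ofReal_eq_zero, not_le]; linarith
  rcases eq_or_ne (fracPer N t E) ⊤ with hPtop | hPtop
  · have h1 : (ENNReal.ofReal (1 - t) * fracPer N t E) ^ (s / t) = ⊤ := by
      rw [hPtop, ENNReal.mul_top hofreal1t]
      exact ENNReal.top_rpow_of_pos hθ'
    have h2 : ENNReal.ofReal (C * (1 / s) * (1 - s / t)⁻¹) * (volume E) ^ (1 - s/t) ≠ 0 := by
      apply mul_ne_zero
      · simp only [ne_eq, ENNReal.ofReal_eq_zero, not_le]; exact hcpos
      · simp only [ne_eq, ENNReal.rpow_eq_zero_iff, not_or]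
        constructor
        · rintro ⟨h, _⟩; exact hm0 h
        · rintro ⟨h, _⟩; exact hEfin.ne h
    rw [h1, ENNReal.mul_top h2]
    exact le_top
  -- main case
  set m' : ℝ := (volume E).toReal with hm'def
  have hm' : 0 < m' := ENNReal.toReal_pos hm0 hEfin.ne
  have hmE : volume E = ENNReal.ofReal m' := (ENNReal.ofReal_toReal hEfin.ne).symm
  set Qe : ℝ≥0∞ := ENNReal.ofReal (1-t) * fracPer N t E with hQedef
  have hQtop : Qe ≠ ⊤ := ENNReal.mul_ne_top ENNReal.ofReal_ne_top hPtop
  have hQ0 : Qe ≠ 0 := mul_ne_zero hofreal1t hP0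
  set Q' : ℝ := Qe.toReal with hQ'def
  have hQ' : 0 < Q' := ENNReal.toReal_pos hQ0 hQtop
  have hQe : Qe = ENNReal.ofReal Q' := (ENNReal.ofReal_toReal hQtop).symm
  set r : ℝ := (m' / Q') ^ (1/t) with hrdef
  have hr : 0 < r := Real.rpow_pos_of_pos (by positivity) _
  set M : ℝ := m' ^ (1 - s/t) * Q' ^ (s/t) with hMdef
  have hM : 0 < M := by positivity
  have hid1 : r ^ (-s) * m' = M := by
    have h1 : r ^ (-s) = (m' / Q') ^ (-(s/t)) := by
      rw [hrdef, ← Real.rpow_mul (by positivity)]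
      congr 1
      field_simp
    have h2 : (m' / Q') ^ (-(s/t)) = Q' ^ (s/t) / m' ^ (s/t) := by
      rw [Real.rpow_neg (by positivity), Real.div_rpow hm'.le hQ'.le, inv_div]
    have h4 : m' ^ (1 - s/t) = m' / m' ^ (s/t) := by
      rw [Real.rpow_sub hm', Real.rpow_one]
    rw [h1, h2, hMdef, h4]
    ring
  have hid2 : r ^ (t-s) * Q' = M := by
    have h1 : r ^ (t-s) = (m' / Q') ^ (1 - s/t) := by
      rw [hrdef, ← Real.rpow_mul (by positivity)]
      congr 1
      field_simp
    have h2 : (m'/Q') ^ (1 - s/t) = m' ^ (1-s/t) / Q' ^ (1-s/t) :=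
      Real.div_rpow hm'.le hQ'.le _
    have h3 : Q' ^ (s/t) * Q' ^ (1 - s/t) = Q' := by
      rw [← Real.rpow_add hQ', show s/t + (1 - s/t) = 1 by ring, Real.rpow_one]
    rw [h1, h2, hMdef, div_mul_eq_mul_div,
      div_eq_iff (ne_of_gt (Real.rpow_pos_of_pos hQ' (1 - s/t))), mul_assoc, h3]
  have hmaster := master (N := N) hN hE hr hs (by linarith) hst ht1
  have hts0 : (0:ℝ) < t - s := by linarith
  have hnum1 : (0:ℝ) ≤ 4 * ((2:ℝ)^N * Vr * r ^ (-s)) / s :=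
    div_nonneg (mul_nonneg (by norm_num)
      (mul_nonneg (mul_nonneg (by positivity) hVr0) (Real.rpow_nonneg hr.le _))) hs.le
  have hnum2 : (0:ℝ) ≤ 4 * ((2:ℝ)^((N:ℝ)+1) * r ^ (t-s)) / (t-s) :=
    div_nonneg (mul_nonneg (by norm_num)
      (mul_nonneg (Real.rpow_nonneg (by norm_num) _) (Real.rpow_nonneg hr.le _))) hts0.le
  have e1 : ENNReal.ofReal (4 * ((2:ℝ)^N * Vr * r ^ (-s)) / s) * volume E
      = ENNReal.ofReal (4 * (2:ℝ)^N * Vr / s * M) := by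
    rw [hmE, ← ENNReal.ofReal_mul hnum1]
    congr 1
    rw [← hid1]
    ring
  have e2 : ENNReal.ofReal (4 * ((2:ℝ)^((N:ℝ)+1) * r ^ (t-s)) / (t-s))
        * (ENNReal.ofReal (1-t) * fracPer N t E)
      = ENNReal.ofReal (4 * (2:ℝ)^((N:ℝ)+1) / (t-s) * M) := by
    rw [← hQedef, hQe, ← ENNReal.ofReal_mul hnum2]
    congr 1
    rw [← hid2]
    ring
  have hpow2 : (2:ℝ)^((N:ℝ)+1) = 2^(N+1) := by
    rw [show ((N:ℝ)+1) = ((N+1 : ℕ):ℝ) by push_cast; ring, Real.rpow_natCast]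
  have hconst : 4 * (2:ℝ)^N * Vr / s * M + 4 * (2:ℝ)^((N:ℝ)+1) / (t-s) * M
      ≤ C * (1/s) * (1 - s/t)⁻¹ * M := by
    have hinv : (1 - s/t)⁻¹ = t / (t-s) := by
      rw [show 1 - s/t = (t-s)/t by field_simp, inv_div]
    have hb1 : 4 * (2:ℝ)^N * Vr ≤ C := by
      rw [hCdef, pow_add]
      nlinarith [pow_pos (zero_lt_two (α := ℝ)) N, hVr0]
    have hb2 : 4 * (2:ℝ)^(N+1) ≤ C := by
      rw [hCdef, pow_add, pow_add]
      nlinarith [pow_pos (zero_lt_two (α := ℝ)) N, hVr0]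
    have hts : 0 < t - s := by linarith
    rw [hpow2, hinv]
    calc 4 * (2:ℝ)^N * Vr / s * M + 4 * (2:ℝ)^(N+1) / (t-s) * M
        ≤ C / s * M + C / (t-s) * M := by
          have u1 : 4 * (2:ℝ)^N * Vr / s ≤ C / s := (div_le_div_iff_of_pos_right hs).2 hb1
          have u2 : 4 * (2:ℝ)^(N+1) / (t-s) ≤ C / (t-s) := (div_le_div_iff_of_pos_right hts).2 hb2
          exact add_le_add (mul_le_mul_of_nonneg_right u1 hM.le)
            (mul_le_mul_of_nonneg_right u2 hM.le)
      _ = C * (1/s) * (t/(t-s)) * M := by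
          field_simp
          ring
  calc fracPer N s E
      ≤ ENNReal.ofReal (4 * ((2:ℝ)^N * Vr * r ^ (-s)) / s) * volume E
        + ENNReal.ofReal (4 * ((2:ℝ)^((N:ℝ)+1) * r ^ (t-s)) / (t-s))
          * (ENNReal.ofReal (1-t) * fracPer N t E) := hmaster
    _ = ENNReal.ofReal (4 * (2:ℝ)^N * Vr / s * M)
        + ENNReal.ofReal (4 * (2:ℝ)^((N:ℝ)+1) / (t-s) * M) := by rw [e1, e2]
    _ = ENNReal.ofReal (4 * (2:ℝ)^N * Vr / s * M + 4 * (2:ℝ)^((N:ℝ)+1) / (t-s) * M) :=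
        (ENNReal.ofReal_add
          (mul_nonneg (div_nonneg (mul_nonneg (mul_nonneg (by norm_num) (by positivity)) hVr0)
            hs.le) hM.le)
          (mul_nonneg (div_nonneg (mul_nonneg (by norm_num)
            (Real.rpow_nonneg (by norm_num) _)) hts0.le) hM.le)).symm
    _ ≤ ENNReal.ofReal (C * (1/s) * (1 - s/t)⁻¹ * M) := ENNReal.ofReal_le_ofReal hconst
    _ = ENNReal.ofReal (C * (1 / s) * (1 - s / t)⁻¹) *
          (volume E) ^ (1 - s / t) *
          (ENNReal.ofReal (1 - t) * fracPer N t E) ^ (s / t) := by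
        rw [hmE, ← hQedef, hQe, ENNReal.ofReal_rpow_of_pos hm', ENNReal.ofReal_rpow_of_pos hQ',
          ← ENNReal.ofReal_mul (by positivity), ← ENNReal.ofReal_mul (by positivity)]
        congr 1
        rw [hMdef]
        ring
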